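/- The Diophantine equation x² + 1 = y^n with integer n ≥ 2 has no solutions in nonzero integers x, y. -/

import Mathlib

open Zsqrtd

local notation "ℤ[i]" => GaussianInt


-- small: t+2 ≤ 2^t for t ≥ 2
lemma aux_two_pow (t : ℕ) (ht : 2 ≤ t) : t + 2 ≤ 2 ^ t := by
  induction t with
  | zero => omega
  | succ s ih =>
    rcases Nat.lt_or_ge s 2 with h | h
    · interval_cases s <;> simp_all <;> omega
    · have := ih h
      have : 2 ^ s ≥ 1 := Nat.one_le_two_pow
      calc s + 1 + 2 ≤ 2 ^ s + 2 ^ s := by omega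
        _ = 2 ^ (s+1) := by ring

-- v2(m) ≤ m - 2 for even m ≥ 4
lemma aux_v2_le (m : ℕ) (hm : 2 ∣ m) (h4 : 4 ≤ m) : padicValNat 2 m + 2 ≤ m := by
  set s := padicValNat 2 m with hs
  rcases Nat.lt_or_ge s 2 with h | h
  · omega
  · have h1 : 2 ^ s ∣ m := pow_padicValNat_dvd
    have h2 : 2 ^ s ≤ m := Nat.le_of_dvd (by omega) h1
    have := aux_two_pow s h
    omega

-- key valuation lemma
lemma key_val (n m v c A : ℕ) (hn : ¬ 2 ∣ n) (hm : 2 ∣ m) (h4 : 4 ≤ m) (hmn : m < n)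
    (hA : A ≠ 0) (hv : v = padicValNat 2 A) (hve : 1 ≤ v)
    (hc : c = padicValNat 2 (n.choose 2)) :
    2 ^ (c + 2 * v + 1) ∣ A ^ m * n.choose m := by
  have hmn' : m ≤ n := hmn.le
  have h2n : 2 ≤ n := by omega
  -- identity
  have hid : n.choose m * m.choose 2 = n.choose 2 * (n - 2).choose (m - 2) :=
    Nat.choose_mul (by omega)
  have hpos1 : 0 < n.choose m := Nat.choose_pos hmn'
  have hpos2 : 0 < m.choose 2 := Nat.choose_pos (by omega)
  have hpos3 : 0 < n.choose 2 := Nat.choose_pos h2n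
  have hpos4 : 0 < (n - 2).choose (m - 2) := Nat.choose_pos (by omega)
  have hval : padicValNat 2 (n.choose m) + padicValNat 2 (m.choose 2)
      = c + padicValNat 2 ((n - 2).choose (m - 2)) := by
    rw [hc, ← padicValNat.mul hpos1.ne' hpos2.ne', ← padicValNat.mul hpos3.ne' hpos4.ne', hid]
  -- v2(C(m,2)) = v2(m) - 1
  have hm1odd : ¬ 2 ∣ (m - 1) := by omega
  have hCm2 : 2 * m.choose 2 = m * (m - 1) := by
    rw [Nat.choose_two_right]
    have : 2 ∣ m * (m-1) := Dvd.dvd.mul_right hm _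
    omega
  have hvm : 1 ≤ padicValNat 2 m := one_le_padicValNat_of_dvd (by omega) hm
  have hCval : 1 + padicValNat 2 (m.choose 2) = padicValNat 2 m := by
    have h1 : padicValNat 2 (2 * m.choose 2) = 1 + padicValNat 2 (m.choose 2) := by
      rw [padicValNat.mul (by norm_num) hpos2.ne', padicValNat.self (by norm_num)]
    have h2 : padicValNat 2 (m * (m-1)) = padicValNat 2 m + padicValNat 2 (m-1) := by
      rw [padicValNat.mul (by omega) (by omega)]
    have h3 : padicValNat 2 (m - 1) = 0 := padicValNat.eq_zero_of_not_dvd hm1odd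
    rw [hCm2] at h1
    omega
  have hv2m := aux_v2_le m hm h4
  -- (m-2)*v ≥ v2(m)
  have hkey2 : 2 * v + padicValNat 2 m ≤ m * v := by
    have : padicValNat 2 m ≤ (m - 2) * v := by
      calc padicValNat 2 m ≤ m - 2 := by omega
        _ = (m-2) * 1 := by omega
        _ ≤ (m-2) * v := Nat.mul_le_mul_left _ hve
    obtain ⟨t, rfl⟩ : ∃ t, m = t + 4 := ⟨m - 4, by omega⟩
    have h2 : t + 2 ≤ (t + 2) * v := Nat.le_mul_of_pos_right _ hve
    have h3 : 2 * v + (t + 2) * v = (t + 4) * v := by ring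
    omega
  have hfin : c + 2 * v + 1 ≤ m * v + padicValNat 2 (n.choose m) := by omega
  have d1 : 2 ^ (m * v) ∣ A ^ m := by
    have : 2 ^ v ∣ A := hv ▸ pow_padicValNat_dvd
    calc 2 ^ (m * v) = (2 ^ v) ^ m := by rw [← pow_mul, Nat.mul_comm]
      _ ∣ A ^ m := pow_dvd_pow_of_dvd this m
  have d2 : 2 ^ (padicValNat 2 (n.choose m)) ∣ n.choose m := pow_padicValNat_dvd
  calc 2 ^ (c + 2*v+1) ∣ 2 ^ (m * v + padicValNat 2 (n.choose m)) := pow_dvd_pow 2 hfin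
    _ = 2 ^ (m*v) * 2 ^ (padicValNat 2 (n.choose m)) := pow_add 2 _ _
    _ ∣ A ^ m * n.choose m := mul_dvd_mul d1 d2




lemma unit_pow_four (u : ℤ[i]) (h : IsUnit u) : u ^ 4 = 1 := by
  have hn : u.norm = 1 := (Zsqrtd.norm_eq_one_iff' (by norm_num) u).mpr h
  rw [Zsqrtd.norm_def] at hn
  have h1 : u.re * u.re + u.im * u.im = 1 := by linarith
  have h2 : -1 ≤ u.re ∧ u.re ≤ 1 ∧ -1 ≤ u.im ∧ u.im ≤ 1 := by
    refine ⟨?_, ?_, ?_, ?_⟩ <;>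
      nlinarith [mul_self_nonneg (u.re + 1), mul_self_nonneg (u.re - 1),
        mul_self_nonneg (u.im + 1), mul_self_nonneg (u.im - 1)]
  obtain ⟨a, b, rfl⟩ : ∃ a b : ℤ, u = ⟨a, b⟩ := ⟨u.re, u.im, rfl⟩
  simp only at h1 h2
  have : (a = 0 ∧ (b = 1 ∨ b = -1)) ∨ (b = 0 ∧ (a = 1 ∨ a = -1)) := by
    rcases h2 with ⟨ha1, ha2, hb1, hb2⟩
    interval_cases a <;> interval_cases b <;> omega
  have hsq : (⟨a, b⟩ : ℤ[i]) ^ 2 = ⟨a*a - b*b, 2*a*b⟩ := by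
    rw [sq, Zsqrtd.ext_iff]
    simp [Zsqrtd.re_mul, Zsqrtd.im_mul]; constructor <;> ring
  have h4 : (⟨a, b⟩ : ℤ[i]) ^ 4 = ((⟨a, b⟩ : ℤ[i]) ^ 2) ^ 2 := by ring
  rcases this with ⟨rfl, rfl | rfl⟩ | ⟨rfl, rfl | rfl⟩ <;>
    · rw [h4, hsq]
      norm_num [Zsqrtd.ext_iff, pow_two, Zsqrtd.re_mul, Zsqrtd.im_mul]

-- imaginary part of powers of sqrtd in ℤ[i]
noncomputable def gim (t : ℕ) : ℤ := ((Zsqrtd.sqrtd : ℤ[i]) ^ t).im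

lemma sqrtd_sq : (Zsqrtd.sqrtd : ℤ[i]) ^ 2 = (-1 : ℤ) := by
  rw [sq, Zsqrtd.dmuld]

lemma gim_even (t : ℕ) : gim (2 * t) = 0 := by
  unfold gim
  rw [pow_mul, sqrtd_sq, ← Int.cast_pow]
  exact Zsqrtd.im_intCast _

lemma gim_odd (t : ℕ) : gim (2 * t + 1) = (-1) ^ t := by
  unfold gim
  rw [pow_succ, pow_mul, sqrtd_sq, ← Int.cast_pow]
  have him : ∀ c : ℤ, ((c : ℤ[i]) * Zsqrtd.sqrtd).im = c := fun c => by
    simp [Zsqrtd.im_mul, Zsqrtd.re_intCast, Zsqrtd.im_intCast,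
      Zsqrtd.re_sqrtd, Zsqrtd.im_sqrtd]
  exact him _

lemma term_im (c d : ℤ) (z : ℤ[i]) : ((c : ℤ[i]) * z * (d : ℤ[i])).im = c * z.im * d := by
  simp [Zsqrtd.im_mul, Zsqrtd.re_mul, Zsqrtd.re_intCast, Zsqrtd.im_intCast]

lemma pow_im_formula (A : ℤ) (n : ℕ) :
    (((A : ℤ[i]) + Zsqrtd.sqrtd) ^ n).im
      = ∑ k ∈ Finset.range (n+1), A ^ k * (n.choose k : ℤ) * gim (n - k) := by
  rw [add_pow]
  have himadd : ∀ (s : Finset ℕ) (F : ℕ → ℤ[i]), (∑ k ∈ s, F k).im = ∑ k ∈ s, (F k).im :=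
    fun s F => map_sum (AddMonoidHom.mk' Zsqrtd.im (fun a b => Zsqrtd.im_add a b)) F s
  rw [himadd]
  apply Finset.sum_congr rfl
  intro k _
  have h1 : ((A:ℤ[i]))^k = ((A^k : ℤ) : ℤ[i]) := by push_cast; ring
  have h2 : ((n.choose k : ℕ) : ℤ[i]) = ((n.choose k : ℤ) : ℤ[i]) := by push_cast; ring
  rw [h1, h2, term_im]
  unfold gim; ring

lemma main_im (M : ℕ) (A X ε : ℤ) (hA : 2 ∣ A) (hε : ε = 1 ∨ ε = -1)
    (h : ((A : ℤ[i]) + Zsqrtd.sqrtd) ^ (2*M+3) = ⟨X, ε⟩) : A = 0 := by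
  by_contra hA0
  have hS : ∑ k ∈ Finset.range (2*M+3+1), A ^ k * ((2*M+3).choose k : ℤ) * gim (2*M+3 - k) = ε := by
    rw [← pow_im_formula, h]
  set f : ℕ → ℤ := fun k => A ^ k * ((2*M+3).choose k : ℤ) * gim (2*M+3 - k) with hf
  rw [Finset.sum_range_succ' f (2*M+3)] at hS
  rw [show (2*M+3) = (2*M+2)+1 by omega,
    Finset.sum_range_succ' (fun k => f (k+1)) (2*M+2)] at hS
  rw [show (2*M+2) = (2*M+1)+1 by omega,
    Finset.sum_range_succ' (fun k => f (k+1+1)) (2*M+1)] at hS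
  -- hS : ((∑ k in range (2M+1), f (k+1+1+1)) + f (0+1+1)) + f (0+1) + f 0 = 1
  have hf0 : f 0 = (-1:ℤ) ^ (M+1) := by
    show A ^ 0 * ((2*M+3).choose 0 : ℤ) * gim (2*M+3 - 0) = _
    rw [show 2*M+3-0 = 2*(M+1)+1 by omega, gim_odd]
    simp
  have hf1 : f (0+1) = 0 := by
    show A ^ 1 * ((2*M+3).choose 1 : ℤ) * gim (2*M+3 - 1) = 0
    rw [show 2*M+3-1 = 2*(M+1) by omega, gim_even, mul_zero]
  have hf2 : f (0+1+1) = A^2 * ((2*M+3).choose 2 : ℤ) * (-1)^M := by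
    show A ^ 2 * ((2*M+3).choose 2 : ℤ) * gim (2*M+3 - 2) = _
    rw [show 2*M+3-2 = 2*M+1 by omega, gim_odd]
  -- A² divides the inner part
  have hdvdsq : (A^2 : ℤ) ∣ (∑ k ∈ Finset.range (2*M+1), f (k+1+1+1)) + f (0+1+1) := by
    apply dvd_add
    · apply Finset.dvd_sum
      intro k _
      show (A^2:ℤ) ∣ A ^ (k+1+1+1) * ((2*M+3).choose (k+1+1+1) : ℤ) * gim (2*M+3 - (k+1+1+1))
      exact dvd_mul_of_dvd_left (dvd_mul_of_dvd_left (pow_dvd_pow A (by omega)) _) _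
    · rw [hf2]
      exact dvd_mul_of_dvd_left (dvd_mul_of_dvd_left dvd_rfl _) _
  have h4A : (4:ℤ) ∣ A^2 := by
    obtain ⟨c, rfl⟩ := hA
    have : (2*c)^2 = 4*c^2 := by ring
    rw [this]; exact Dvd.intro _ rfl
  rw [hf0, hf1] at hS
  set S : ℤ := (∑ k ∈ Finset.range (2*M+1), f (k+1+1+1)) + f (0+1+1) with hSdef
  have hSval : S = ε - (-1:ℤ)^(M+1) := by linarith [hS]
  have h4S : (4:ℤ) ∣ S := h4A.trans hdvdsq
  have hsgn : (-1:ℤ)^(M+1) = ε ∧ S = 0 := by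
    rcases Nat.even_or_odd M with hM | hM
    · have h1 : (-1:ℤ)^(M+1) = -1 := Odd.neg_one_pow (Even.add_one hM)
      rcases hε with rfl | rfl
      · exfalso
        have h2 : S = 2 := by rw [hSval, h1]; ring
        rw [h2] at h4S; norm_num at h4S
      · exact ⟨h1, by rw [hSval, h1]; ring⟩
    · have h1 : (-1:ℤ)^(M+1) = 1 := Even.neg_one_pow (Odd.add_one hM)
      rcases hε with rfl | rfl
      · exact ⟨h1, by rw [hSval, h1]; ring⟩
      · exfalso
        have h2 : S = -2 := by rw [hSval, h1]; ring
        rw [h2] at h4S; norm_num at h4S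
  obtain ⟨hsign, hS0⟩ := hsgn
  have hMneg : (-1:ℤ)^M = -ε := by
    have : (-1:ℤ)^(M+1) = (-1)^M * (-1) := by ring
    rw [hsign] at this
    linarith
  have hsum3 : ∑ k ∈ Finset.range (2*M+1), f (k+1+1+1)
      = ε * (A^2 * (((2*M+3).choose 2 : ℕ) : ℤ)) := by
    have hs := hSdef
    rw [hf2, hMneg] at hs
    have := hS0
    rw [hs] at this
    linarith [this]
  set v := padicValNat 2 A.natAbs with hv
  set c2 := padicValNat 2 ((2*M+3).choose 2) with hc2
  have hAnz : A.natAbs ≠ 0 := Int.natAbs_ne_zero.mpr hA0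
  have h2A : 2 ∣ A.natAbs := by
    have := Int.natAbs_dvd_natAbs.mpr hA
    simpa using this
  have hve : 1 ≤ v := hv ▸ one_le_padicValNat_of_dvd hAnz h2A
  have hdvd : (2:ℤ)^(c2+2*v+1) ∣ ∑ k ∈ Finset.range (2*M+1), f (k+1+1+1) := by
    apply Finset.dvd_sum
    intro k hk
    have hk' : k < 2*M+1 := Finset.mem_range.mp hk
    show (2:ℤ)^(c2+2*v+1) ∣
      A ^ (k+1+1+1) * (((2*M+3).choose (k+1+1+1) : ℕ) : ℤ) * gim (2*M+3 - (k+1+1+1))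
    rcases Nat.even_or_odd k with ⟨t, ht⟩ | hkodd
    · rw [show 2*M+3-(k+1+1+1) = 2*(M - t) by omega, gim_even, mul_zero]
      exact dvd_zero _
    · apply dvd_mul_of_dvd_left
      have hko : k % 2 = 1 := Nat.odd_iff.mp hkodd
      have hkey := key_val (2*M+3) (k+1+1+1) v c2 A.natAbs (by omega) (by omega)
        (by omega) (by omega) hAnz hv hve hc2
      rw [show ((2:ℤ))^(c2+2*v+1) = ((2^(c2+2*v+1) : ℕ) : ℤ) by push_cast; ring,
        Int.natCast_dvd, Int.natAbs_mul, Int.natAbs_pow, Int.natAbs_natCast]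
      exact hkey
  rw [hsum3] at hdvd
  have hdvd2 : (2:ℤ)^(c2+2*v+1) ∣ A^2 * (((2*M+3).choose 2 : ℕ) : ℤ) := by
    rcases hε with rfl | rfl
    · simpa using hdvd
    · rw [neg_one_mul] at hdvd
      exact dvd_neg.mp hdvd
  replace hdvd := hdvd2
  rw [show ((2:ℤ))^(c2+2*v+1) = ((2^(c2+2*v+1) : ℕ) : ℤ) by push_cast; ring,
    Int.natCast_dvd, Int.natAbs_mul, Int.natAbs_pow, Int.natAbs_natCast] at hdvd
  have hCpos : 0 < (2*M+3).choose 2 := Nat.choose_pos (by omega)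
  have hne : A.natAbs^2 * (2*M+3).choose 2 ≠ 0 :=
    Nat.mul_ne_zero (pow_ne_zero _ hAnz) hCpos.ne'
  have hpv : padicValNat 2 (A.natAbs^2 * (2*M+3).choose 2) + 1 = c2 + 2*v + 1 := by
    rw [padicValNat.mul (pow_ne_zero _ hAnz) hCpos.ne', padicValNat.pow A.natAbs 2]
    omega
  exact pow_succ_padicValNat_not_dvd hne (hpv ▸ hdvd)

lemma mk_one_eq (a : ℤ) : (⟨a, 1⟩ : ℤ[i]) = (a : ℤ[i]) + Zsqrtd.sqrtd := by
  ext <;> simp [Zsqrtd.re_intCast, Zsqrtd.im_intCast]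

lemma cast_mul_sqrtd (c : ℤ) : ((c:ℤ[i]) * Zsqrtd.sqrtd) = ⟨0, c⟩ := by
  ext <;> simp [Zsqrtd.re_mul, Zsqrtd.im_mul, Zsqrtd.re_intCast, Zsqrtd.im_intCast]

lemma sqrtd_odd_pow (t : ℕ) : (Zsqrtd.sqrtd : ℤ[i]) ^ (2*t+1) = ⟨0, (-1)^t⟩ := by
  have hsq : (Zsqrtd.sqrtd : ℤ[i]) ^ 2 = ((-1 : ℤ) : ℤ[i]) := by rw [sq, Zsqrtd.dmuld]
  rw [pow_succ, pow_mul, hsq, ← Int.cast_pow, cast_mul_sqrtd]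

lemma sq_aux (x s : ℤ) (h : x^2 + 1 = s^2) : x = 0 := by
  have h1 : (s - x) * (s + x) = 1 := by linear_combination -h
  rcases Int.mul_eq_one_iff_eq_one_or_neg_one.mp h1 with ⟨h2, h3⟩ | ⟨h2, h3⟩ <;> omega

theorem lebesgue_nagell_d_one (x y : ℤ) (n : ℕ) (hn : 2 ≤ n)
    (h : x ^ 2 + 1 = y ^ n) : x = 0 := by
  rcases Nat.even_or_odd n with ⟨m, hm⟩ | hodd
  · have hm2 : n = 2*m := by omega
    have hsq : x^2 + 1 = (y^m)^2 := by rw [h, hm2, pow_mul]; ring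
    exact sq_aux x (y^m) hsq
  · obtain ⟨M, hM⟩ : ∃ M, n = 2*M+3 := by
      obtain ⟨t, ht⟩ := hodd; exact ⟨t-1, by omega⟩
    subst hM
    -- x is even
    have hxeven : 2 ∣ x := by
      by_contra hxo
      obtain ⟨k, hk⟩ : ∃ k, x = 2*k+1 := ⟨(x-1)/2, by omega⟩
      have hx2 : x^2 = 4*k^2+4*k+1 := by rw [hk]; ring
      have hy : (2:ℤ) ∣ y := by
        by_contra hyo
        have hyodd : Odd y := Int.odd_iff.mpr (by omega)
        have h2 : Odd (y^(2*M+3)) := hyodd.pow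
        rw [← h] at h2
        obtain ⟨r, hr⟩ := h2
        omega
      obtain ⟨z, hz⟩ := hy
      have h4 : (4:ℤ) ∣ y^(2*M+3) := by
        rw [hz]
        exact ⟨z^2*(2*z)^(2*M+1), by ring⟩
      rw [← h] at h4
      obtain ⟨t, ht4⟩ := h4
      omega
    obtain ⟨c, hc⟩ := hxeven
    -- Gaussian integer setup
    set α : ℤ[i] := ⟨x, 1⟩ with hα
    set β : ℤ[i] := ⟨x, -1⟩ with hβ
    have hαd : α = (x : ℤ[i]) + Zsqrtd.sqrtd := by
      rw [hα]; ext <;> simp [Zsqrtd.re_intCast, Zsqrtd.im_intCast]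
    have hβd : β = (x : ℤ[i]) - Zsqrtd.sqrtd := by
      rw [hβ]; ext <;> simp [Zsqrtd.re_intCast, Zsqrtd.im_intCast]
    have hs : (Zsqrtd.sqrtd : ℤ[i])^2 = -1 := by
      rw [sq, Zsqrtd.dmuld]; push_cast; ring
    have hX : ((x:ℤ) : ℤ[i]) = 2*((c:ℤ) : ℤ[i]) := by rw [hc]; push_cast; ring
    have hprod : α * β = ((y : ℤ[i]))^(2*M+3) := by
      have hcast : ((x^2 + 1 : ℤ) : ℤ[i]) = ((y^(2*M+3) : ℤ) : ℤ[i]) := by rw [h]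
      push_cast at hcast
      rw [hαd, hβd]
      linear_combination hcast - hs
    have hcop : IsCoprime α β := by
      refine ⟨(1-2*((c:ℤ[i]))^2)*β + ((c:ℤ[i]))^2*α, ((c:ℤ[i]))^2*β, ?_⟩
      rw [hαd, hβd]
      linear_combination (((x:ℤ[i])) + 2*((c:ℤ[i]))) * hX + (4*((c:ℤ[i]))^2 - 1) * hs
    obtain ⟨w, hw⟩ := exists_associated_pow_of_mul_eq_pow' hcop hprod
    obtain ⟨u, hu⟩ := hw
    have hu4 : ((u:ℤ[i]))^4 = 1 := unit_pow_four u u.isUnit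
    have ht : (((u:ℤ[i]))^(2*M+3))^(2*M+3) = (u:ℤ[i]) := by
      rw [← pow_mul, show (2*M+3)*(2*M+3) = 4*(M*M+3*M+2)+1 by ring, pow_add, pow_mul,
        hu4, one_pow, one_mul, pow_one]
    obtain ⟨W, hW⟩ : ∃ W : ℤ[i], W^(2*M+3) = α :=
      ⟨w * ((u:ℤ[i]))^(2*M+3), by rw [mul_pow, ht, hu]⟩
    clear hu ht hu4 hprod hcop
    obtain ⟨a, b⟩ := W
    -- conjugate equation
    have hstar : ((⟨a, -b⟩ : ℤ[i]))^(2*M+3) = ⟨x, -1⟩ := by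
      have h1 : (star (⟨a, b⟩ : ℤ[i]))^(2*M+3) = star α := by rw [← star_pow, hW]
      rw [hα] at h1
      simpa [Zsqrtd.star_mk] using h1
    -- b = ±1
    have hdvd : ((⟨a,b⟩:ℤ[i]) - ⟨a,-b⟩) ∣ ((⟨a,b⟩:ℤ[i])^(2*M+3) - (⟨a,-b⟩:ℤ[i])^(2*M+3)) :=
      sub_dvd_pow_sub_pow _ _ _
    rw [hW, hstar, hα] at hdvd
    have hsub1 : ((⟨a,b⟩:ℤ[i]) - ⟨a,-b⟩) = ⟨0, 2*b⟩ := by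
      ext <;> simp [Zsqrtd.re_sub, Zsqrtd.im_sub] <;> ring
    have hsub2 : ((⟨x,1⟩:ℤ[i]) - ⟨x,-1⟩) = ⟨0, 2⟩ := by
      ext <;> simp [Zsqrtd.re_sub, Zsqrtd.im_sub]
    rw [hsub1, hsub2] at hdvd
    obtain ⟨q, hq⟩ := hdvd
    have hq2 : (2:ℤ) = 2*b*q.re := by
      have := congrArg Zsqrtd.im hq
      simpa [Zsqrtd.im_mul] using this
    have hb : b = 1 ∨ b = -1 :=
      Int.isUnit_iff.mp (IsUnit.of_mul_eq_one (a := b) q.re (by linarith))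
    -- a even
    have hb2 : b^2 = 1 := by rcases hb with rfl | rfl <;> norm_num
    have hnorm : (a^2 + b^2)^(2*M+3) = x^2 + 1 := by
      have h1 : Zsqrtd.norm ((⟨a,b⟩:ℤ[i])^(2*M+3)) = Zsqrtd.norm α := by rw [hW]
      have h2 : ∀ z : ℤ[i], Zsqrtd.norm (z^(2*M+3)) = (Zsqrtd.norm z)^(2*M+3) :=
        fun z => map_pow Zsqrtd.normMonoidHom z (2*M+3)
      rw [h2, hα] at h1
      rw [Zsqrtd.norm_def, Zsqrtd.norm_def] at h1
      simp only at h1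
      rw [show a*a - (-1)*b*b = a^2+b^2 by ring] at h1
      rw [h1]; ring
    have haeven : 2 ∣ a := by
      by_contra hao
      obtain ⟨t, htt⟩ : ∃ t, a = 2*t+1 := ⟨(a-1)/2, by omega⟩
      have h1 : (2:ℤ) ∣ a^2 + b^2 := ⟨2*t^2+2*t+1, by rw [htt, hb2]; ring⟩
      have h2 : (2:ℤ) ∣ (a^2+b^2)^(2*M+3) := h1.trans (dvd_pow_self _ (by omega))
      rw [hnorm] at h2
      obtain ⟨r, hr⟩ := h2
      have hx2 : x^2 = 4*c^2 := by rw [hc]; ring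
      omega
    -- reduce to main_im
    have hxzero : ∀ ε : ℤ, ε = 1 ∨ ε = -1 →
        (Zsqrtd.sqrtd : ℤ[i])^(2*M+3) = ⟨x, ε⟩ → x = 0 := by
      intro ε _ hεeq
      rw [show 2*M+3 = 2*(M+1)+1 by ring, sqrtd_odd_pow] at hεeq
      have hre := congrArg Zsqrtd.re hεeq
      simpa using hre.symm
    rcases hb with rfl | rfl
    · have hone : ((a : ℤ[i]) + Zsqrtd.sqrtd)^(2*M+3) = ⟨x, 1⟩ := by
        rw [← mk_one_eq, hW, hα]
      have ha0 := main_im M a x 1 haeven (Or.inl rfl) hone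
      subst ha0
      rw [show ((0:ℤ) : ℤ[i]) + Zsqrtd.sqrtd = Zsqrtd.sqrtd by push_cast; ring] at hone
      exact hxzero 1 (Or.inl rfl) hone
    · have hone : ((a : ℤ[i]) + Zsqrtd.sqrtd)^(2*M+3) = ⟨x, -1⟩ := by
        rw [← mk_one_eq]
        simpa using hstar
      have ha0 := main_im M a x (-1) haeven (Or.inr rfl) hone
      subst ha0
      rw [show ((0:ℤ) : ℤ[i]) + Zsqrtd.sqrtd = Zsqrtd.sqrtd by push_cast; ring] at hone
      exact hxzero (-1) (Or.inr rfl) hone
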